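/- Let H be a bipartite graph of (1−ε)-complete degree whose edges are 3-coloured, and suppose each colour has a non-trivial monochromatic component covering one full bipart pattern as in the final configuration of the key lemma proof: the top bipart of H is partitioned into three sets X̂, Ŷ, Ẑ and the bottom bipart into six sets Â,B̂,Ĉ,D̂,Ê,F̂ such that all edges between any top set and any bottom set carry a single colour according to the Latin-square pattern (X̂ sees Â,B̂ in red, Ĉ,Ê in blue, D̂,F̂ in green; Ŷ sees Ĉ,D̂ in red, Â,F̂ in blue, B̂,Ê in green; Ẑ sees Ê,F̂ in red, B̂,D̂ in blue, Â,Ĉ in green). If |X̂| ≤ |Â| + |B̂| then H can be covered by five vertex-disjoint monochromatic connected matchings. -/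

import Mathlib

open SimpleGraph

/-- The simple graph on `α ⊕ β` whose edges are the colour-`c` edges of the
(not necessarily proper) edge-colouring `χ` of the complete bipartite graph
with biparts `α` and `β`. -/
def colourGraph {α β : Type} {r : ℕ} (χ : α → β → Fin r) (c : Fin r) :
    SimpleGraph (α ⊕ β) where
  Adj x y := ∃ a b, χ a b = c ∧
    ((x = Sum.inl a ∧ y = Sum.inr b) ∨ (x = Sum.inr b ∧ y = Sum.inl a))
  symm := by
    constructor
    rintro x y ⟨a, b, hc, h | h⟩
    · exact ⟨a, b, hc, Or.inr ⟨h.2, h.1⟩⟩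
    · exact ⟨a, b, hc, Or.inl ⟨h.2, h.1⟩⟩
  loopless := by
    constructor
    rintro x ⟨a, b, hc, ⟨h1, h2⟩ | ⟨h1, h2⟩⟩ <;> simp_all

/-- A monochromatic component is non-trivial if it meets both biparts. -/
def Nontriv {α β : Type} {r : ℕ} (χ : α → β → Fin r) (c : Fin r)
    (K : (colourGraph χ c).ConnectedComponent) : Prop :=
  (∃ a : α, Sum.inl a ∈ K.supp) ∧ (∃ b : β, Sum.inr b ∈ K.supp)

/-- A monochromatic connected matching in an `r`-edge-coloured `K_{n,n}`:
a matching all of whose edges have colour `colour` and lie in a single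
monochromatic component. A single vertex (field `single`, allowed only when
there are no edges) and the empty graph count as degenerate matchings. -/
structure CMatching (n r : ℕ) (χ : Fin n → Fin n → Fin r) where
  colour : Fin r
  pairs : Finset (Fin n × Fin n)
  mono : ∀ p ∈ pairs, χ p.1 p.2 = colour
  inj1 : ∀ p ∈ pairs, ∀ q ∈ pairs, p.1 = q.1 → p = q
  inj2 : ∀ p ∈ pairs, ∀ q ∈ pairs, p.2 = q.2 → p = q
  conn : ∀ p ∈ pairs, ∀ q ∈ pairs,
    (colourGraph χ colour).Reachable (Sum.inl p.1) (Sum.inl q.1)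
  single : Option (Fin n ⊕ Fin n)
  hsingle : single = none ∨ pairs = ∅

/-- The vertex set covered by a monochromatic connected matching. -/
def CMatching.verts {n r : ℕ} {χ : Fin n → Fin n → Fin r} (M : CMatching n r χ) :
    Set (Fin n ⊕ Fin n) :=
  {x | (∃ p ∈ M.pairs, x = Sum.inl p.1 ∨ x = Sum.inr p.2) ∨ x ∈ M.single}

/-- `V(K_{n,n})` can be partitioned into at most five monochromatic connected
matchings. -/
def FiveMatchingPartition {n r : ℕ} (χ : Fin n → Fin n → Fin r) : Prop :=
  ∃ M : Fin 5 → CMatching n r χ,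
    (∀ i j, i ≠ j → Disjoint (M i).verts (M j).verts) ∧
    (⋃ i, (M i).verts) = Set.univ

/-- The Latin-square colouring pattern: rows correspond to the top blocks
`X̂, Ŷ, Ẑ`, columns to the bottom blocks `Â, B̂, Ĉ, D̂, Ê, F̂`; colour `0` is
red, `1` is blue, `2` is green. -/
def pattern : Fin 3 → Fin 6 → Fin 3 :=
  ![![0, 0, 1, 2, 1, 2],
    ![1, 2, 0, 0, 2, 1],
    ![2, 1, 2, 1, 0, 0]]


set_option maxHeartbeats 1000000

def sigmaFstFiber {ι : Type*} (F : ι → Type*) (a0 : ι) :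
    {x : Σ a, F a // x.1 = a0} ≃ F a0 where
  toFun x := x.2 ▸ x.1.2
  invFun y := ⟨⟨a0, y⟩, rfl⟩
  left_inv := by rintro ⟨⟨a, y⟩, rfl⟩; rfl
  right_inv y := rfl

def sigmaSndFiber {ι κ : Type*} (G : ι → κ → Type*) (j0 : κ) :
    {x : Σ i, Σ j, G i j // x.2.1 = j0} ≃ Σ i, {y : Σ j, G i j // y.1 = j0} where
  toFun x := ⟨x.1.1, ⟨x.1.2, x.2⟩⟩
  invFun y := ⟨⟨y.1, y.2.1⟩, y.2.2⟩
  left_inv := by rintro ⟨⟨i, y⟩, h⟩; rfl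
  right_inv := by rintro ⟨i, y, h⟩; rfl

lemma construction {n : ℕ} (t : Fin n → Fin 3) (bf : Fin n → Fin 6)
    (χ : Fin n → Fin n → Fin 3) (hχ : ∀ i j, χ i j = pattern (t i) (bf j))
    (m : Fin 3 → Fin 6 → ℕ) (slot : Fin 3 → Fin 6 → Fin 5) (topOf colOf : Fin 5 → Fin 3)
    (hrow : ∀ r, ∑ j, m r j = Fintype.card {i : Fin n // t i = r})
    (hcol : ∀ j, ∑ r, m r j = Fintype.card {i : Fin n // bf i = j})
    (hs : ∀ r j, m r j ≠ 0 → topOf (slot r j) = r ∧ colOf (slot r j) = pattern r j) :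
    FiveMatchingPartition χ := by
  classical
  obtain ⟨e1, ht⟩ : ∃ e : Fin n ≃ (Σ r : Fin 3, Σ j : Fin 6, Fin (m r j)),
      ∀ i, (e i).1 = t i :=
    ⟨Equiv.ofFiberEquiv (f := t) (g := fun x : (Σ r : Fin 3, Σ j : Fin 6, Fin (m r j)) => x.1) (fun r => Fintype.equivOfCardEq (by
      rw [Fintype.card_congr (sigmaFstFiber _ r), Fintype.card_sigma]
      simp [← hrow r])), fun i =>
      Equiv.ofFiberEquiv_map (f := t) (g := fun x : (Σ r : Fin 3, Σ j : Fin 6, Fin (m r j)) => x.1) _ i⟩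
  obtain ⟨e2, hb⟩ : ∃ e : Fin n ≃ (Σ r : Fin 3, Σ j : Fin 6, Fin (m r j)),
      ∀ i, (e i).2.1 = bf i :=
    ⟨Equiv.ofFiberEquiv (f := bf) (g := fun x : (Σ r : Fin 3, Σ j : Fin 6, Fin (m r j)) => x.2.1) (fun j => Fintype.equivOfCardEq (by
      rw [Fintype.card_congr ((sigmaSndFiber _ j).trans
        (Equiv.sigmaCongrRight fun r => sigmaFstFiber _ j)), Fintype.card_sigma]
      simp [← hcol j])), fun i =>
      Equiv.ofFiberEquiv_map (f := bf) (g := fun x : (Σ r : Fin 3, Σ j : Fin 6, Fin (m r j)) => x.2.1) _ i⟩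
  set σ := e1.trans e2.symm with hσdef
  set J : Fin n → Fin 6 := fun i => (e1 i).2.1 with hJdef
  have hσ : ∀ i, bf (σ i) = J i := fun i => by
    rw [← hb (σ i)]
    show (e2 (e2.symm (e1 i))).2.1 = _
    rw [Equiv.apply_symm_apply]
  have hmne : ∀ i, m (t i) (J i) ≠ 0 := fun i => by
    have hpos : 0 < m (e1 i).1 ((e1 i).2.1) := (e1 i).2.2.pos
    rw [← ht i]
    exact Nat.pos_iff_ne_zero.mp hpos
  set μ : Fin n → Fin 5 := fun i => slot (t i) (J i) with hμdef
  have htop : ∀ i, topOf (μ i) = t i := fun i => (hs _ _ (hmne i)).1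
  have hcolR : ∀ i, colOf (μ i) = pattern (t i) (J i) := fun i => (hs _ _ (hmne i)).2
  have hchi : ∀ i, χ i (σ i) = colOf (μ i) := fun i => by
    rw [hχ, hσ i, hcolR i]
  have hcross : ∀ i i', μ i = μ i' → χ i' (σ i) = colOf (μ i) := fun i i' hμ => by
    have htt : t i' = t i := by rw [← htop i, ← htop i', hμ]
    rw [hχ, hσ i, htt, hcolR i]
  refine ⟨fun s => {
    colour := colOf s
    pairs := (Finset.univ.filter fun i => μ i = s).image fun i => (i, σ i)
    mono := by
      intro p hp
      simp only [Finset.mem_image, Finset.mem_filter, Finset.mem_univ, true_and] at hp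
      obtain ⟨i, hi, rfl⟩ := hp
      rw [hchi i, hi]
    inj1 := by
      intro p hp q hq h1
      simp only [Finset.mem_image, Finset.mem_filter, Finset.mem_univ, true_and] at hp hq
      obtain ⟨i, hi, rfl⟩ := hp; obtain ⟨i', hi', rfl⟩ := hq
      simp_all
    inj2 := by
      intro p hp q hq h2
      simp only [Finset.mem_image, Finset.mem_filter, Finset.mem_univ, true_and] at hp hq
      obtain ⟨i, hi, rfl⟩ := hp; obtain ⟨i', hi', rfl⟩ := hq
      simp only at h2
      have : i = i' := σ.injective h2
      simp [this]
    conn := by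
      intro p hp q hq
      simp only [Finset.mem_image, Finset.mem_filter, Finset.mem_univ, true_and] at hp hq
      obtain ⟨i, hi, rfl⟩ := hp; obtain ⟨i', hi', rfl⟩ := hq
      have a1 : (colourGraph χ (colOf s)).Adj (Sum.inl i) (Sum.inr (σ i)) :=
        ⟨i, σ i, by rw [hchi i, hi], Or.inl ⟨rfl, rfl⟩⟩
      have a2 : (colourGraph χ (colOf s)).Adj (Sum.inr (σ i)) (Sum.inl i') :=
        ⟨i', σ i, by rw [hcross i i' (hi.trans hi'.symm), hi], Or.inr ⟨rfl, rfl⟩⟩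
      exact a1.reachable.trans a2.reachable
    single := none
    hsingle := Or.inl rfl }, ?_, ?_⟩
  · intro s s' hne
    rw [Set.disjoint_left]
    rintro v hv hv'
    simp only [CMatching.verts, Finset.mem_image, Finset.mem_filter, Finset.mem_univ, true_and,
      Set.mem_setOf_eq, Option.mem_def, reduceCtorEq, or_false] at hv hv'
    obtain ⟨p, ⟨i, hi, rfl⟩, hc⟩ := hv
    obtain ⟨p', ⟨i', hi', rfl⟩, hc'⟩ := hv'
    rcases hc with h | h <;> rcases hc' with h' | h' <;> rw [h] at h'
    · simp only [Sum.inl.injEq] at h'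
      exact hne (by rw [← hi, ← hi', h'])
    · exact absurd h' (by simp)
    · exact absurd h'.symm (by simp)
    · simp only [Sum.inr.injEq] at h'
      exact hne (by rw [← hi, ← hi', σ.injective h'])
  · ext v
    simp only [Set.mem_iUnion, Set.mem_univ, iff_true, CMatching.verts, Set.mem_setOf_eq,
      Finset.mem_image, Finset.mem_filter, Finset.mem_univ, true_and, Option.mem_def,
      reduceCtorEq, or_false]
    cases v with
    | inl i => exact ⟨μ i, ⟨(i, σ i), ⟨i, rfl, rfl⟩, Or.inl rfl⟩⟩
    | inr j =>
      refine ⟨μ (σ.symm j), ⟨(σ.symm j, σ (σ.symm j)), ⟨σ.symm j, rfl, rfl⟩, Or.inr ?_⟩⟩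
      rw [Equiv.apply_symm_apply]

def mkM (p0 p1 u0 u1 u2 u3 u4 u5 v0 v1 v2 v3 v4 v5 : ℕ) : Fin 3 → Fin 6 → ℕ :=
  ![![p0,p1,0,0,0,0], ![u0,u1,u2,u3,u4,u5], ![v0,v1,v2,v3,v4,v5]]

def PlanExists (x y z a b c d e f : ℕ) : Prop :=
  ∃ (m : Fin 3 → Fin 6 → ℕ) (slot : Fin 3 → Fin 6 → Fin 5) (topOf colOf : Fin 5 → Fin 3),
    (∑ j, m 0 j = x) ∧ (∑ j, m 1 j = y) ∧ (∑ j, m 2 j = z) ∧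
    (∀ j, ∑ r, m r j = ![a,b,c,d,e,f] j) ∧
    (∀ r j, m r j ≠ 0 → topOf (slot r j) = r ∧ colOf (slot r j) = pattern r j)

lemma apply_scenario (x y z a b c d e f p0 p1 u0 u1 u2 u3 u4 u5 v0 v1 v2 v3 v4 v5 : ℕ)
    (slot : Fin 3 → Fin 6 → Fin 5) (topOf colOf : Fin 5 → Fin 3)
    (hx : p0 + p1 + 0 + 0 + 0 + 0 = x)
    (hy : u0 + u1 + u2 + u3 + u4 + u5 = y)
    (hz : v0 + v1 + v2 + v3 + v4 + v5 = z)
    (ha : p0 + u0 + v0 = a) (hb : p1 + u1 + v1 = b)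
    (hc : 0 + u2 + v2 = c) (hd : 0 + u3 + v3 = d)
    (he : 0 + u4 + v4 = e) (hf : 0 + u5 + v5 = f)
    (hs : ∀ r j, mkM p0 p1 u0 u1 u2 u3 u4 u5 v0 v1 v2 v3 v4 v5 r j ≠ 0 →
      topOf (slot r j) = r ∧ colOf (slot r j) = pattern r j) :
    PlanExists x y z a b c d e f := by
  refine ⟨mkM p0 p1 u0 u1 u2 u3 u4 u5 v0 v1 v2 v3 v4 v5, slot, topOf, colOf, ?_, ?_, ?_, ?_, hs⟩
  · rw [Fin.sum_univ_six]; exact hx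
  · rw [Fin.sum_univ_six]; exact hy
  · rw [Fin.sum_univ_six]; exact hz
  · intro j; fin_cases j <;> rw [Fin.sum_univ_three]
    · exact ha
    · exact hb
    · exact hc
    · exact hd
    · exact he
    · exact hf

lemma plan_exists (x y z a b c d e f : ℕ) (hsum : x + y + z = a+b+c+d+e+f)
    (hX : x ≤ a + b) : PlanExists x y z a b c d e f := by
  have hcase : (y ≤ c + d) ∨
    (c + d + (a+b-x) ≤ y) ∨
    (e + f ≤ y ∧ y ≤ e + f + (a+b-x)) ∨
    ((b - x) + d ≤ y ∧ y ≤ min b (a+b-x) + c + d + e) ∨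
    ((a - x) + c ≤ y ∧ y ≤ min a (a+b-x) + c + d + f) ∨
    (z ≤ min a (a+b-x) + c) ∨
    (z ≤ min b (a+b-x) + d) ∨
    (y ≤ min b (a+b-x) + e) ∨
    (y ≤ min a (a+b-x) + f) := by omega
  rcases hcase with h | h | h | h | h | h | h | h | h
  -- A
  · refine apply_scenario x y z a b c d e f
      (a - min a (a+b-x)) (b - (a+b-x - min a (a+b-x)))
      0 0 (min y c) (y - min y c) 0 0
      (min a (a+b-x)) (a+b-x - min a (a+b-x)) (c - min y c) (d - (y - min y c)) e f
      ![![0,0,0,0,0,0],![1,1,1,1,1,1],![2,3,2,3,4,4]] ![0,1,2,2,2] ![0,0,2,1,0]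
      (by omega) (by omega) (by omega) (by omega) (by omega) (by omega) (by omega)
      (by omega) (by omega) ?_
    intro r j; fin_cases r <;> fin_cases j <;>
      first | exact fun _ => ⟨by decide, by decide⟩ | exact fun hm => absurd rfl hm
  -- B
  · refine apply_scenario x y z a b c d e f
      (a - min a (a+b-x)) (b - (a+b-x - min a (a+b-x)))
      (min a (a+b-x)) (a+b-x - min a (a+b-x)) c d (e - min z e) (f - (z - min z e))
      0 0 0 0 (min z e) (z - min z e)
      ![![0,0,0,0,0,0],![2,3,1,1,3,2],![4,4,4,4,4,4]] ![0,1,1,1,2] ![0,0,1,2,0]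
      (by omega) (by omega) (by omega) (by omega) (by omega) (by omega) (by omega)
      (by omega) (by omega) ?_
    intro r j; fin_cases r <;> fin_cases j <;>
      first | exact fun _ => ⟨by decide, by decide⟩ | exact fun hm => absurd rfl hm
  -- C
  · refine apply_scenario x y z a b c d e f
      (a - min a (a+b-x)) (b - (a+b-x - min a (a+b-x)))
      (min (y - (e+f)) (min a (a+b-x))) (y - (e+f) - min (y - (e+f)) (min a (a+b-x))) 0 0 e f
      (min a (a+b-x) - min (y - (e+f)) (min a (a+b-x)))
      ((a+b-x - min a (a+b-x)) - (y - (e+f) - min (y - (e+f)) (min a (a+b-x)))) c d 0 0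
      ![![0,0,0,0,0,0],![1,2,1,1,2,1],![3,4,3,4,3,3]] ![0,1,1,2,2] ![0,1,2,2,1]
      (by omega) (by omega) (by omega) (by omega) (by omega) (by omega) (by omega)
      (by omega) (by omega) ?_
    intro r j; fin_cases r <;> fin_cases j <;>
      first | exact fun _ => ⟨by decide, by decide⟩ | exact fun hm => absurd rfl hm
  -- D
  · refine apply_scenario x y z a b c d e f
      (a - ((a+b-x) - min (min b (a+b-x)) (y - d))) (b - min (min b (a+b-x)) (y - d))
      0 (min (min b (a+b-x)) (y - d)) (min (y - d - min (min b (a+b-x)) (y - d)) c) d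
      (y - d - min (min b (a+b-x)) (y - d) - min (y - d - min (min b (a+b-x)) (y - d)) c) 0
      ((a+b-x) - min (min b (a+b-x)) (y - d)) 0
      (c - min (y - d - min (min b (a+b-x)) (y - d)) c) 0
      (e - (y - d - min (min b (a+b-x)) (y - d) - min (y - d - min (min b (a+b-x)) (y - d)) c)) f
      ![![0,0,0,0,0,0],![1,1,2,2,1,1],![3,3,3,3,4,4]] ![0,1,1,2,2] ![0,2,0,2,0]
      (by omega) (by omega) (by omega) (by omega) (by omega) (by omega) (by omega)
      (by omega) (by omega) ?_
    intro r j; fin_cases r <;> fin_cases j <;>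
      first | exact fun _ => ⟨by decide, by decide⟩ | exact fun hm => absurd rfl hm
  -- E
  · refine apply_scenario x y z a b c d e f
      (a - min (min a (a+b-x)) (y - c)) (b - ((a+b-x) - min (min a (a+b-x)) (y - c)))
      (min (min a (a+b-x)) (y - c)) 0 c (min (y - c - min (min a (a+b-x)) (y - c)) d) 0
      (y - c - min (min a (a+b-x)) (y - c) - min (y - c - min (min a (a+b-x)) (y - c)) d)
      0 ((a+b-x) - min (min a (a+b-x)) (y - c)) 0
      (d - min (y - c - min (min a (a+b-x)) (y - c)) d) e
      (f - (y - c - min (min a (a+b-x)) (y - c) - min (y - c - min (min a (a+b-x)) (y - c)) d))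
      ![![0,0,0,0,0,0],![1,1,2,2,1,1],![3,3,3,3,4,4]] ![0,1,1,2,2] ![0,1,0,1,0]
      (by omega) (by omega) (by omega) (by omega) (by omega) (by omega) (by omega)
      (by omega) (by omega) ?_
    intro r j; fin_cases r <;> fin_cases j <;>
      first | exact fun _ => ⟨by decide, by decide⟩ | exact fun hm => absurd rfl hm
  -- F
  · refine apply_scenario x y z a b c d e f
      (a - min a (a+b-x)) (b - (a+b-x - min a (a+b-x)))
      (min a (a+b-x) - min z (min a (a+b-x))) (a+b-x - min a (a+b-x))
      (c - (z - min z (min a (a+b-x)))) d e f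
      (min z (min a (a+b-x))) 0 (z - min z (min a (a+b-x))) 0 0 0
      ![![0,0,0,0,0,0],![2,3,1,1,3,2],![4,4,4,4,4,4]] ![0,1,1,1,2] ![0,0,1,2,2]
      (by omega) (by omega) (by omega) (by omega) (by omega) (by omega) (by omega)
      (by omega) (by omega) ?_
    intro r j; fin_cases r <;> fin_cases j <;>
      first | exact fun _ => ⟨by decide, by decide⟩ | exact fun hm => absurd rfl hm
  -- G
  · refine apply_scenario x y z a b c d e f
      (a - ((a+b-x) - min b (a+b-x))) (b - min b (a+b-x))
      ((a+b-x) - min b (a+b-x)) (min b (a+b-x) - min z (min b (a+b-x))) c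
      (d - (z - min z (min b (a+b-x)))) e f
      0 (min z (min b (a+b-x))) 0 (z - min z (min b (a+b-x))) 0 0
      ![![0,0,0,0,0,0],![2,3,1,1,3,2],![4,4,4,4,4,4]] ![0,1,1,1,2] ![0,0,1,2,1]
      (by omega) (by omega) (by omega) (by omega) (by omega) (by omega) (by omega)
      (by omega) (by omega) ?_
    intro r j; fin_cases r <;> fin_cases j <;>
      first | exact fun _ => ⟨by decide, by decide⟩ | exact fun hm => absurd rfl hm
  -- H
  · refine apply_scenario x y z a b c d e f
      (a - ((a+b-x) - min b (a+b-x))) (b - min b (a+b-x))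
      0 (min y (min b (a+b-x))) 0 0 (y - min y (min b (a+b-x))) 0
      ((a+b-x) - min b (a+b-x)) (min b (a+b-x) - min y (min b (a+b-x))) c d
      (e - (y - min y (min b (a+b-x)))) f
      ![![0,0,0,0,0,0],![1,1,1,1,1,1],![2,3,2,3,4,4]] ![0,1,2,2,2] ![0,2,2,1,0]
      (by omega) (by omega) (by omega) (by omega) (by omega) (by omega) (by omega)
      (by omega) (by omega) ?_
    intro r j; fin_cases r <;> fin_cases j <;>
      first | exact fun _ => ⟨by decide, by decide⟩ | exact fun hm => absurd rfl hm
  -- I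
  · refine apply_scenario x y z a b c d e f
      (a - min a (a+b-x)) (b - (a+b-x - min a (a+b-x)))
      (min y (min a (a+b-x))) 0 0 0 0 (y - min y (min a (a+b-x)))
      (min a (a+b-x) - min y (min a (a+b-x))) (a+b-x - min a (a+b-x)) c d e
      (f - (y - min y (min a (a+b-x))))
      ![![0,0,0,0,0,0],![1,1,1,1,1,1],![2,3,2,3,4,4]] ![0,1,2,2,2] ![0,1,2,1,0]
      (by omega) (by omega) (by omega) (by omega) (by omega) (by omega) (by omega)
      (by omega) (by omega) ?_
    intro r j; fin_cases r <;> fin_cases j <;>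
      first | exact fun _ => ⟨by decide, by decide⟩ | exact fun hm => absurd rfl hm

/-- If a 3-edge-colouring of `K_{n,n}` follows the Latin-square block pattern
(top blocks `X̂, Ŷ, Ẑ` given by `t`, bottom blocks `Â, …, F̂` given by `bf`)
and `|X̂| ≤ |Â| + |B̂|`, then the vertex set can be covered by five
vertex-disjoint monochromatic connected matchings. -/
theorem pattern_colouring_five_matchings_of_small_X
    {n : ℕ} (t : Fin n → Fin 3) (bf : Fin n → Fin 6)
    (χ : Fin n → Fin n → Fin 3)
    (hχ : ∀ a b, χ a b = pattern (t a) (bf b))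
    (hX : {a : Fin n | t a = 0}.ncard ≤
      {b : Fin n | bf b = 0}.ncard + {b : Fin n | bf b = 1}.ncard) :
    FiveMatchingPartition χ := by
  classical
  have hncard : ∀ {k : ℕ} (g : Fin n → Fin k) (r : Fin k),
      {i : Fin n | g i = r}.ncard = Fintype.card {i : Fin n // g i = r} := by
    intro k g r
    rw [← Nat.card_coe_set_eq, Nat.card_eq_fintype_card]
    exact Fintype.card_congr (Equiv.subtypeEquivRight fun _ => Iff.rfl)
  have htot : ∀ {k : ℕ} (g : Fin n → Fin k),
      ∑ r, Fintype.card {i : Fin n // g i = r} = n := by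
    intro k g
    have h := Fintype.card_congr (Equiv.sigmaFiberEquiv g)
    rw [Fintype.card_sigma, Fintype.card_fin] at h
    exact h
  obtain ⟨m, slot, topOf, colOf, h0, h1, h2, hcols, hs⟩ :=
    plan_exists (Fintype.card {i : Fin n // t i = 0}) (Fintype.card {i : Fin n // t i = 1})
      (Fintype.card {i : Fin n // t i = 2})
      (Fintype.card {i : Fin n // bf i = 0}) (Fintype.card {i : Fin n // bf i = 1})
      (Fintype.card {i : Fin n // bf i = 2}) (Fintype.card {i : Fin n // bf i = 3})
      (Fintype.card {i : Fin n // bf i = 4}) (Fintype.card {i : Fin n // bf i = 5})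
      (by
        have h3 := htot t
        have h6 := htot bf
        rw [Fin.sum_univ_three] at h3
        rw [Fin.sum_univ_six] at h6
        omega)
      (by rw [hncard t 0, hncard bf 0, hncard bf 1] at hX; exact hX)
  exact construction t bf χ hχ m slot topOf colOf
    (by intro r; fin_cases r; exacts [h0, h1, h2])
    (by intro j; fin_cases j
        exacts [hcols 0, hcols 1, hcols 2, hcols 3, hcols 4, hcols 5])
    hs
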